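/- Let p ≥ 7 be prime. Then Σ_{k=1}^{(p-1)/2} 2^k/k ≡ (2 - Q_p)/p (mod p ℤ_p), where Q_p is the p-th companion Pell number. -/

import Mathlib

/-- The companion Pell sequence: `Q 0 = 2`, `Q 1 = 2`, `Q (i+2) = 2 * Q (i+1) + Q i`. -/
def pellQ : ℕ → ℕ
  | 0 => 2
  | 1 => 2
  | (i + 2) => 2 * pellQ (i + 1) + pellQ i

open Finset Zsqrtd

lemma pellQ_zsqrtd : ∀ n : ℕ, ((pellQ n : ℤ) : ℤ√2) = (1 + sqrtd) ^ n + (1 - sqrtd) ^ n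
  | 0 => by norm_num [pellQ]
  | 1 => by norm_num [pellQ]
  | (n + 2) => by
    have h1 := pellQ_zsqrtd (n + 1)
    have h0 := pellQ_zsqrtd n
    have hs : (sqrtd : ℤ√2) * sqrtd = 2 := by exact_mod_cast Zsqrtd.dmuld (d := 2)
    have hr : pellQ (n + 2) = 2 * pellQ (n + 1) + pellQ n := rfl
    rw [hr]
    push_cast at h1 h0 ⊢
    rw [h1, h0]
    linear_combination (-((1+sqrtd:ℤ√2)^n + (1-sqrtd)^n)) * hs

lemma aux_sum_even {R : Type*} [AddCommMonoid R] (F : ℕ → R) (h : ∀ j, F (2*j+1) = 0) :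
    ∀ M, ∑ k ∈ range (2*M+2), F k = ∑ j ∈ range (M+1), F (2*j)
  | 0 => by simp [Finset.sum_range_succ, h 0]
  | (M+1) => by
    have e : 2*(M+1)+2 = (2*M+2)+1+1 := by ring
    rw [e, Finset.sum_range_succ, Finset.sum_range_succ, aux_sum_even F h M,
      Finset.sum_range_succ (fun j => F (2*j)) (M+1)]
    have h1 : F (2*M+2+1) = 0 := h (M+1)
    have e3 : 2*(M+1) = 2*M+2 := by ring
    rw [h1, e3]
    abel

lemma pellQ_sum (p m : ℕ) (hm : p = 2*m+1) :
    (pellQ p : ℤ) = ∑ j ∈ range (m+1), 2 * 2^j * (p.choose (2*j) : ℤ) := by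
  have hs : (sqrtd : ℤ√2) * sqrtd = 2 := by exact_mod_cast Zsqrtd.dmuld (d := 2)
  have h := pellQ_zsqrtd p
  have h1 : (1 + sqrtd : ℤ√2) = sqrtd + 1 := by ring
  have h2 : (1 - sqrtd : ℤ√2) = (-sqrtd) + 1 := by ring
  rw [h1, h2, add_pow, add_pow, ← Finset.sum_add_distrib] at h
  set F : ℕ → ℤ√2 := fun k =>
    sqrtd ^ k * 1 ^ (p-k) * (p.choose k : ℤ√2) + (-sqrtd) ^ k * 1 ^ (p-k) * (p.choose k : ℤ√2)
    with hF
  have hs2 : (sqrtd : ℤ√2) ^ 2 = 2 := by rw [sq]; exact hs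
  have hodd : ∀ j, F (2*j+1) = 0 := by
    intro j
    simp only [hF]
    rw [pow_succ, pow_succ, pow_mul, pow_mul, neg_sq]
    ring
  have heven : ∀ j, F (2*j) = 2 * 2^j * (p.choose (2*j) : ℤ√2) := by
    intro j
    simp only [hF]
    rw [pow_mul, pow_mul, neg_sq, hs2, one_pow]
    ring
  have hrange : p + 1 = 2*m+2 := by omega
  rw [hrange] at h
  rw [aux_sum_even F hodd m] at h
  have : ((pellQ p : ℤ) : ℤ√2) = ((∑ j ∈ range (m+1), 2 * 2^j * (p.choose (2*j) : ℤ) : ℤ) : ℤ√2) := by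
    rw [h]
    push_cast
    exact Finset.sum_congr rfl fun j _ => by rw [heven j]
  exact_mod_cast this

lemma choose_sub_one_cast (p : ℕ) (hp : p.Prime) : ∀ j : ℕ, j ≤ p - 1 →
    (((p-1).choose j : ℕ) : ZMod p) = (-1)^j := by
  intro j
  induction j with
  | zero => simp
  | succ j ih =>
    intro hj
    have hj' : j ≤ p - 1 := by omega
    have hp1 : p - 1 + 1 = p := by have := hp.two_le; omega
    have hsum : (p-1).choose j + (p-1).choose (j+1) = p.choose (j+1) := by
      have h := Nat.choose_succ_succ (p-1) j
      rw [Nat.succ_eq_add_one, Nat.succ_eq_add_one, hp1] at h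
      exact h.symm
    have hd : p ∣ p.choose (j+1) :=
      Nat.Prime.dvd_choose_self hp (Nat.succ_ne_zero j) (by have := hp.two_le; omega)
    have : (((p-1).choose j : ℕ) : ZMod p) + (((p-1).choose (j+1) : ℕ) : ZMod p) = 0 := by
      have := (ZMod.natCast_eq_zero_iff (p.choose (j+1)) p).mpr hd
      rw [← Nat.cast_add, hsum, this]
    rw [ih hj'] at this
    have : (((p-1).choose (j+1) : ℕ) : ZMod p) = -(-1)^j := by linear_combination this
    rw [this, pow_succ]
    ring

lemma norm_sum_le_one {p : ℕ} [Fact p.Prime] (s : Finset ℕ) (f : ℕ → ℚ_[p])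
    (h : ∀ i ∈ s, ‖f i‖ ≤ 1) : ‖∑ i ∈ s, f i‖ ≤ 1 := by
  induction s using Finset.induction with
  | empty => simp
  | @insert a s ha ih =>
    rw [Finset.sum_insert ha]
    exact le_trans (Padic.nonarchimedean _ _)
      (max_le (h a (Finset.mem_insert_self a s))
        (ih fun i hi => h i (Finset.mem_insert_of_mem hi)))

theorem sum_two_pow_div_congr (p : ℕ) [hp : Fact p.Prime] (h7 : 7 ≤ p) :
    ∃ z : ℤ_[p],
      (∑ k ∈ Finset.Icc 1 ((p - 1) / 2), (2 : ℚ_[p]) ^ k / (k : ℚ_[p])) -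
          (((2 - (pellQ p : ℤ)) / (p : ℤ) : ℤ) : ℚ_[p]) =
        (p : ℚ_[p]) * (z : ℚ_[p]) := by
  have hp' := hp.out
  set m := (p - 1) / 2 with hmdef
  have hodd : p % 2 = 1 := Nat.odd_iff.mp (hp'.odd_of_ne_two (by omega))
  have hpm : p = 2 * m + 1 := by omega
  set c : ℕ → ℕ := fun k => p.choose (2*k) / p with hc
  set d : ℕ → ℕ := fun k => (1 + (p-1).choose (2*k-1)) / p with hd
  have hck : ∀ k ∈ Icc 1 m, p.choose (2*k) = p * c k := by
    intro k hk
    simp only [mem_Icc] at hk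
    have : p ∣ p.choose (2*k) :=
      Nat.Prime.dvd_choose_self hp' (by omega) (by omega)
    exact (Nat.mul_div_cancel' this).symm
  have hdk : ∀ k ∈ Icc 1 m, 1 + 2 * k * c k = p * d k := by
    intro k hk
    simp only [mem_Icc] at hk
    have hrel : p * (p-1).choose (2*k-1) = p.choose (2*k) * (2*k) := by
      have := Nat.add_one_mul_choose_eq (p-1) (2*k-1)
      have e1 : p - 1 + 1 = p := by omega
      have e2 : 2*k-1+1 = 2*k := by omega
      rwa [e1, e2] at this
    have hcc : (p-1).choose (2*k-1) = 2 * k * c k := by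
      have := hck k (mem_Icc.mpr ⟨hk.1, hk.2⟩)
      rw [this] at hrel
      have : p * (p-1).choose (2*k-1) = p * (2 * k * c k) := by rw [hrel]; ring
      exact Nat.eq_of_mul_eq_mul_left (by omega) this
    have hdvd : p ∣ 1 + (p-1).choose (2*k-1) := by
      haveI : NeZero p := ⟨by omega⟩
      rw [← ZMod.natCast_eq_zero_iff]
      push_cast
      rw [choose_sub_one_cast p hp' (2*k-1) (by omega)]
      have : Odd (2*k-1) := by refine Nat.odd_iff.mpr ?_; omega
      rw [this.neg_one_pow]
      ring
    rw [← hcc]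
    exact (Nat.mul_div_cancel' hdvd).symm
  -- integer value of the division
  have hQ : (pellQ p : ℤ) = ∑ j ∈ range (m+1), 2 * 2^j * (p.choose (2*j) : ℤ) :=
    pellQ_sum p m hpm
  have hsplit : (∑ j ∈ range (m+1), 2 * 2^j * (p.choose (2*j) : ℤ))
      = 2 + ∑ j ∈ Icc 1 m, 2 * 2^j * (p.choose (2*j) : ℤ) := by
    rw [Finset.sum_range_succ']
    have : ∑ j ∈ Icc 1 m, (2 * 2^j * (p.choose (2*j) : ℤ))
        = ∑ i ∈ range m, 2 * 2^(1+i) * (p.choose (2*(1+i)) : ℤ) := by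
      rw [show Icc 1 m = Ico 1 (m+1) from rfl, Finset.sum_Ico_eq_sum_range]
      simp
    rw [this]
    simp [add_comm]
  have hfactor : (2 : ℤ) - pellQ p = p * (-(∑ j ∈ Icc 1 m, 2 * 2^j * (c j : ℤ))) := by
    rw [hQ, hsplit]
    have : ∑ j ∈ Icc 1 m, 2 * 2^j * (p.choose (2*j) : ℤ)
        = ∑ j ∈ Icc 1 m, (p : ℤ) * (2 * 2^j * (c j : ℤ)) := by
      refine Finset.sum_congr rfl fun j hj => ?_
      have := hck j hj
      have : (p.choose (2*j) : ℤ) = p * c j := by exact_mod_cast this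
      rw [this]; ring
    rw [this, ← Finset.mul_sum]
    ring
  have hp0 : (p : ℤ) ≠ 0 := by positivity
  have hdiv : ((2 - (pellQ p : ℤ)) / (p : ℤ) : ℤ) = -(∑ j ∈ Icc 1 m, 2 * 2^j * (c j : ℤ)) := by
    rw [hfactor, Int.mul_ediv_cancel_left _ hp0]
  -- now in ℚ_p
  have hterm : ∀ k ∈ Icc 1 m,
      (2:ℚ_[p])^k / k + 2 * 2^k * (c k : ℚ_[p]) = (p:ℚ_[p]) * (2^k * (d k : ℚ_[p]) / k) := by
    intro k hk
    simp only [mem_Icc] at hk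
    have hk0 : (k : ℚ_[p]) ≠ 0 := Nat.cast_ne_zero.mpr (by omega)
    have hnum : ((1 + 2 * k * c k : ℕ) : ℚ_[p]) = ((p * d k : ℕ) : ℚ_[p]) := by
      rw [hdk k (mem_Icc.mpr hk)]
    push_cast at hnum
    field_simp
    linear_combination hnum
  set S : ℚ_[p] := ∑ k ∈ Icc 1 m, 2^k * (d k : ℚ_[p]) / k with hS
  have hSnorm : ‖S‖ ≤ 1 := by
    apply norm_sum_le_one
    intro k hk
    simp only [mem_Icc] at hk
    have hknorm : ‖(k : ℚ_[p])‖ = 1 := by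
      rcases lt_or_eq_of_le (Padic.norm_int_le_one (p := p) (k : ℤ)) with h | h
      · exfalso
        rw [Padic.norm_intCast_lt_one_iff (p := p)] at h
        have : (p:ℤ) ∣ (k:ℤ) := h
        have : p ∣ k := by exact_mod_cast this
        have := Nat.le_of_dvd (by omega) this
        omega
      · exact_mod_cast h
    have h1 : ‖(2:ℚ_[p])^k * (d k : ℚ_[p])‖ ≤ 1 := by
      have : ((2:ℚ_[p])^k * (d k : ℚ_[p])) = ((2^k * d k : ℕ) : ℚ_[p]) := by push_cast; ring
      rw [this]
      exact_mod_cast Padic.norm_int_le_one ((2^k * d k : ℕ) : ℤ)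
    calc ‖(2:ℚ_[p])^k * (d k : ℚ_[p]) / k‖ = ‖(2:ℚ_[p])^k * (d k : ℚ_[p])‖ / ‖(k:ℚ_[p])‖ := by
          rw [norm_div]
      _ ≤ 1 := by rw [hknorm]; simpa using h1
  refine ⟨⟨S, hSnorm⟩, ?_⟩
  have hcoe : ((⟨S, hSnorm⟩ : ℤ_[p]) : ℚ_[p]) = S := rfl
  rw [hcoe, hdiv]
  push_cast
  rw [hS, Finset.mul_sum, sub_neg_eq_add, ← Finset.sum_add_distrib]
  exact Finset.sum_congr rfl fun k hk => by
    have := hterm k hk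
    linear_combination this
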